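/- arXiv:2501.03099 — 2 statements merged into one kernel-verified Lean document; each statement's English description precedes it below -/
import Mathlib

section
/- Define Δ(c) = |K^E(c)| − |L^E(c)| where K^E(c) (resp. L^E(c)) is the set of tuples in E(c) of even (resp. odd) length. Then Δ satisfies Δ(c) = Δ(c−2) − Δ(c−3) − Δ(c−4) for all c ≥ 8, with Δ(4)=−2, Δ(5)=0, Δ(6)=−2, Δ(7)=2. -/
/-- `Eset c` is the set of nonempty tuples of even integers `e_i` with `|e_i| ≥ 4`
and `c = Σ|e_i| − #{i : sign e_i = sign e_{i+1}}`. -/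
def Eset (c : ℕ) : Set (List ℤ) :=
  {l | l ≠ [] ∧ (∀ e ∈ l, Even e ∧ 4 ≤ |e|) ∧
    (c : ℤ) = (l.map (fun e => |e|)).sum
      - ((l.zip l.tail).filter (fun p => p.1.sign == p.2.sign)).length}

/-- Tuples in `Eset c` of even length (knots). -/
def KEset (c : ℕ) : Set (List ℤ) := {l | l ∈ Eset c ∧ Even l.length}

/-- Tuples in `Eset c` of odd length (2-component links). -/
def LEset (c : ℕ) : Set (List ℤ) := {l | l ∈ Eset c ∧ Odd l.length}

noncomputable def Δ (c : ℕ) : ℤ := (Nat.card (KEset c) : ℤ) - Nat.card (LEset c)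

/-! ### Auxiliary definitions -/

def cost (l : List ℤ) : ℤ :=
  (l.map (fun e => |e|)).sum
    - ((l.zip l.tail).filter (fun p => p.1.sign == p.2.sign)).length

lemma mem_Eset {c : ℕ} {l : List ℤ} :
    l ∈ Eset c ↔ l ≠ [] ∧ (∀ e ∈ l, Even e ∧ 4 ≤ |e|) ∧ (c : ℤ) = cost l := Iff.rfl

lemma cost_singleton (e : ℤ) : cost [e] = |e| := by simp [cost]

lemma cost_cons (e a : ℤ) (t : List ℤ) :
    cost (e :: a :: t) = |e| + cost (a :: t) - (if e.sign = a.sign then 1 else 0) := by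
  by_cases h : e.sign = a.sign <;>
    simp [cost, List.filter_cons, h] <;> ring

lemma matches_le (l : List ℤ) :
    (((l.zip l.tail).filter (fun p => p.1.sign == p.2.sign)).length : ℤ) ≤ l.length := by
  have h1 := List.length_filter_le (fun p : ℤ × ℤ => p.1.sign == p.2.sign) (l.zip l.tail)
  have h2 : (l.zip l.tail).length ≤ l.length := by
    rw [List.length_zip]; omega
  exact_mod_cast le_trans h1 h2

lemma cost_ge (l : List ℤ) (hl : l ≠ []) (hg : ∀ e ∈ l, 4 ≤ |e|) :
    3 * l.length + 1 ≤ cost l := by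
  induction l with
  | nil => simp at hl
  | cons e t ih =>
    match t with
    | [] => simpa [cost_singleton] using hg e (by simp)
    | a :: r =>
      have h1 := ih (by simp) (fun x hx => hg x (by simp [hx]))
      have h2 := hg e (by simp)
      rw [cost_cons]
      have : (if e.sign = a.sign then (1:ℤ) else 0) ≤ 1 := by split <;> norm_num
      simp only [List.length_cons] at *
      push_cast at *
      linarith

/-! ### Sign lemmas -/

lemma sign_bump {e : ℤ} (he : e ≠ 0) :
    (e + 2 * e.sign).sign = e.sign ∧ |e + 2 * e.sign| = |e| + 2 := by
  rcases he.lt_or_gt with h | h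
  · rw [Int.sign_eq_neg_one_of_neg h]
    have h2 : e + 2 * (-1) < 0 := by linarith
    rw [Int.sign_eq_neg_one_of_neg h2, abs_of_neg h2, abs_of_neg h]
    constructor <;> ring
  · rw [Int.sign_eq_one_of_pos h]
    have h2 : 0 < e + 2 * 1 := by linarith
    rw [Int.sign_eq_one_of_pos h2, abs_of_pos h2, abs_of_pos h]
    constructor <;> ring

lemma sign_unbump {e : ℤ} (he : 6 ≤ |e|) :
    (e - 2 * e.sign).sign = e.sign ∧ |e - 2 * e.sign| = |e| - 2 := by
  rcases lt_trichotomy e 0 with h | h | h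
  · rw [Int.sign_eq_neg_one_of_neg h]
    rw [abs_of_neg h] at he
    have h2 : e - 2 * (-1) < 0 := by linarith
    rw [Int.sign_eq_neg_one_of_neg h2, abs_of_neg h2, abs_of_neg h]
    constructor <;> ring
  · exact absurd he (by simp [h])
  · rw [Int.sign_eq_one_of_pos h]
    rw [abs_of_pos h] at he
    have h2 : 0 < e - 2 * 1 := by linarith
    rw [Int.sign_eq_one_of_pos h2, abs_of_pos h2, abs_of_pos h]
    constructor <;> ring

lemma sign_pm {e : ℤ} (he : e ≠ 0) : e.sign = 1 ∨ e.sign = -1 := by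
  rcases he.lt_or_gt with h | h
  · right; exact Int.sign_eq_neg_one_of_neg h
  · left; exact Int.sign_eq_one_of_pos h

lemma even_abs' {e : ℤ} (h : Even e) : Even |e| := by
  rcases abs_cases e with ⟨h', -⟩ | ⟨h', -⟩ <;> rw [h']
  · exact h
  · exact h.neg

lemma parity_flip₁ {n : ℕ} {b : Bool} (h : Even (n + 1) ↔ b = true) :
    Even n ↔ (!b) = true := by
  rw [Nat.even_add_one] at h; rcases b <;> simp_all

lemma parity_flip₂ {n : ℕ} {b : Bool} (h : Even n ↔ (!b) = true) :
    Even (n + 1) ↔ b = true := by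
  rw [Nat.even_add_one]; rcases b <;> simp_all

lemma ne_zero_of_mem {c : ℕ} {l : List ℤ} (hl : l ∈ Eset c) {e : ℤ} (he : e ∈ l) : e ≠ 0 := by
  have := (mem_Eset.mp hl).2.1 e he
  intro h; rw [h] at this; simp at this

/-! ### Finiteness -/

lemma finite_boundedLists (s : Set ℤ) (hs : s.Finite) (n : ℕ) :
    {l : List ℤ | l.length ≤ n ∧ ∀ e ∈ l, e ∈ s}.Finite := by
  induction n with
  | zero =>
    apply Set.Finite.subset (Set.finite_singleton ([] : List ℤ))
    rintro l ⟨hl, -⟩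
    simp_all [List.length_eq_zero_iff]
  | succ n ih =>
    apply Set.Finite.subset
      (Set.Finite.insert ([] : List ℤ)
        ((hs.biUnion (fun e _ => ih.image (fun t => e :: t)))))
    rintro l ⟨hl, hmem⟩
    match l with
    | [] => simp
    | e :: t =>
      right
      refine Set.mem_biUnion (hmem e (by simp)) ⟨t, ⟨?_, fun x hx => hmem x (by simp [hx])⟩, rfl⟩
      simpa using hl

lemma length_le_of_mem_Eset {c : ℕ} {l : List ℤ} (hl : l ∈ Eset c) : 3 * l.length + 1 ≤ c := by
  obtain ⟨h1, h2, h3⟩ := mem_Eset.mp hl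
  have := cost_ge l h1 (fun e he => (h2 e he).2)
  exact_mod_cast h3 ▸ this

lemma abs_le_of_mem_Eset {c : ℕ} {l : List ℤ} (hl : l ∈ Eset c) {e : ℤ} (he : e ∈ l) :
    |e| ≤ 2 * c := by
  obtain ⟨h1, h2, h3⟩ := mem_Eset.mp hl
  have hsum : |e| ≤ (l.map (fun e => |e|)).sum :=
    List.single_le_sum (by simp) _ (List.mem_map_of_mem he)
  have hm := matches_le l
  have hlen := length_le_of_mem_Eset hl
  have hlen' : (l.length : ℤ) ≤ c := by exact_mod_cast by omega
  rw [cost] at h3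
  push_cast at *
  linarith

lemma Eset_finite (c : ℕ) : (Eset c).Finite := by
  apply Set.Finite.subset
    (finite_boundedLists (Set.Icc (-(2*c) : ℤ) (2*c)) (Set.finite_Icc _ _) c)
  intro l hl
  refine ⟨by have := length_le_of_mem_Eset hl; omega, fun e he => ?_⟩
  have := abs_le_of_mem_Eset hl he
  simp only [Set.mem_Icc]
  constructor
  · linarith [neg_abs_le e]
  · linarith [le_abs_self e]

/-! ### The maps and the parity-refined sets -/

def bump : List ℤ → List ℤ
  | [] => []
  | e :: t => (e + 2 * e.sign) :: t

def pre (s : ℤ) (t : List ℤ) : List ℤ := (s * t.headI.sign) :: t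

def M (b : Bool) (c : ℕ) : Set (List ℤ) := {l | l ∈ Eset c ∧ (Even l.length ↔ b = true)}

lemma M_finite (b : Bool) (c : ℕ) : (M b c).Finite :=
  (Eset_finite c).subset (fun _ h => h.1)

lemma KEset_eq (c : ℕ) : KEset c = M true c := by
  ext l
  exact ⟨fun ⟨h, he⟩ => ⟨h, by simp [he]⟩, fun ⟨h, he⟩ => ⟨h, he.mpr rfl⟩⟩

lemma LEset_eq (c : ℕ) : LEset c = M false c := by
  ext l
  constructor
  · rintro ⟨h, ho⟩
    exact ⟨h, ⟨fun hev => absurd hev (Nat.not_even_iff_odd.mpr ho), fun hf => by simp at hf⟩⟩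
  · rintro ⟨h, hiff⟩
    exact ⟨h, Nat.not_even_iff_odd.mp (fun hev => by simpa using hiff.mp hev)⟩

lemma cost_bump (e : ℤ) (he : e ≠ 0) (t : List ℤ) :
    cost ((e + 2 * e.sign) :: t) = cost (e :: t) + 2 := by
  match t with
  | [] => rw [cost_singleton, cost_singleton, (sign_bump he).2]
  | a :: r => rw [cost_cons, cost_cons, (sign_bump he).1, (sign_bump he).2]; ring

lemma pre_head (s a : ℤ) (hs : s = 4 ∨ s = -4) (ha : a ≠ 0) :
    |s * a.sign| = 4 ∧ Even (s * a.sign) ∧ ((s * a.sign).sign = a.sign ↔ s = 4) := by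
  rcases sign_pm ha with h | h <;> rcases hs with rfl | rfl <;> rw [h] <;> refine ⟨by decide, by decide, ?_⟩ <;> simp <;> decide

/-! ### The partition -/

lemma partition (b : Bool) (c c₂ c₃ c₄ : ℕ)
    (h2 : c = c₂ + 2) (h3 : c = c₃ + 3) (h4 : c = c₄ + 4) (hc : 8 ≤ c) :
    M b c = bump '' M b c₂ ∪ pre 4 '' M (!b) c₃ ∪ pre (-4) '' M (!b) c₄ := by
  ext l
  constructor
  · rintro ⟨hE, hpar⟩
    obtain ⟨hne, hg, hcost⟩ := mem_Eset.mp hE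
    match l with
    | [] => exact absurd rfl hne
    | e :: t =>
      obtain ⟨heven, habs⟩ := hg e (by simp)
      have he0 : e ≠ 0 := ne_zero_of_mem hE (by simp)
      have habs' : |e| = 4 ∨ 6 ≤ |e| := by
        obtain ⟨k, hk⟩ := even_abs' heven
        omega
      rcases habs' with h4e | h6e
      · -- |e| = 4 : prepend cases
        match t with
        | [] =>
          exfalso
          rw [cost_singleton, h4e] at hcost
          omega
        | a :: r =>
          have ha0 : a ≠ 0 := ne_zero_of_mem hE (by simp)
          have hta : (a :: r) ∈ Eset (c - 4 + 1) ∨ True := Or.inr trivial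
          rw [cost_cons, h4e] at hcost
          have hsign_e : e = e.sign * 4 := by
            have := Int.sign_mul_abs e
            rw [h4e] at this
            linarith
          by_cases hss : e.sign = a.sign
          · -- matching sign: pre 4
            left; right
            refine ⟨a :: r, ⟨mem_Eset.mpr ⟨by simp, fun x hx => hg x (by simp [hx]), ?_⟩, ?_⟩, ?_⟩
            · rw [if_pos hss] at hcost
              push_cast [h3]
              push_cast [h3] at hcost
              linarith
            · simp only [List.length_cons] at hpar ⊢
              exact parity_flip₁ hpar
            · show (4 * (a :: r).headI.sign) :: a :: r = e :: a :: r
              simp only [List.headI]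
              rw [hsign_e, hss]; ring_nf
          · -- non-matching sign: pre (-4)
            right
            refine ⟨a :: r, ⟨mem_Eset.mpr ⟨by simp, fun x hx => hg x (by simp [hx]), ?_⟩, ?_⟩, ?_⟩
            · rw [if_neg hss] at hcost
              push_cast [h4]
              push_cast [h4] at hcost
              linarith
            · simp only [List.length_cons] at hpar ⊢
              exact parity_flip₁ hpar
            · show ((-4) * (a :: r).headI.sign) :: a :: r = e :: a :: r
              simp only [List.headI]
              have : e.sign = -a.sign := by
                rcases sign_pm he0 with h | h <;> rcases sign_pm ha0 with h' | h' <;>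
                  rw [h, h'] at hss ⊢ <;> omega
              rw [hsign_e, this]; ring_nf
      · -- |e| ≥ 6 : bump
        left; left
        refine ⟨(e - 2 * e.sign) :: t, ⟨mem_Eset.mpr ⟨by simp, ?_, ?_⟩, ?_⟩, ?_⟩
        · rintro x hx
          rcases List.mem_cons.mp hx with rfl | hx
          · refine ⟨by rcases heven with ⟨k, hk⟩; exact ⟨k - e.sign, by rw [hk]; ring⟩, ?_⟩
            rw [(sign_unbump h6e).2]; omega
          · exact hg x (by simp [hx])
        · -- cost
          have hne0' : e - 2 * e.sign ≠ 0 := by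
            intro h
            have := (sign_unbump h6e).2
            rw [h] at this
            simp at this; omega
          have key : cost ((e - 2 * e.sign + 2 * (e - 2 * e.sign).sign) :: t) =
              cost ((e - 2 * e.sign) :: t) + 2 := cost_bump _ hne0' t
          rw [(sign_unbump h6e).1] at key
          have : e - 2 * e.sign + 2 * e.sign = e := by ring
          rw [this] at key
          push_cast [h2]
          push_cast at hcost
          linarith
        · simpa using hpar
        · show bump ((e - 2 * e.sign) :: t) = e :: t
          simp only [bump]
          rw [(sign_unbump h6e).1]
          congr 1; ring
  · intro hl
    rcases hl with (⟨m, ⟨hmE, hmp⟩, rfl⟩ | ⟨m, ⟨hmE, hmp⟩, rfl⟩) | ⟨m, ⟨hmE, hmp⟩, rfl⟩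
    · -- bump image
      obtain ⟨hne, hg, hcost⟩ := mem_Eset.mp hmE
      match m with
      | [] => exact absurd rfl hne
      | e :: t =>
        have he0 : e ≠ 0 := ne_zero_of_mem hmE (by simp)
        obtain ⟨heven, habs⟩ := hg e (by simp)
        refine ⟨mem_Eset.mpr ⟨by simp [bump], ?_, ?_⟩, by simpa [bump] using hmp⟩
        · rintro x hx
          simp only [bump, List.mem_cons] at hx
          rcases hx with rfl | hx
          · exact ⟨by rcases heven with ⟨k, hk⟩; exact ⟨k + e.sign, by rw [hk]; ring⟩,
              by rw [(sign_bump he0).2]; omega⟩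
          · exact hg x (by simp [hx])
        · show (c : ℤ) = cost ((e + 2 * e.sign) :: t)
          rw [cost_bump e he0 t]
          push_cast [h2] at hcost ⊢
          linarith
    · -- pre 4 image
      obtain ⟨hne, hg, hcost⟩ := mem_Eset.mp hmE
      match m with
      | [] => exact absurd rfl hne
      | a :: r =>
        have ha0 : a ≠ 0 := ne_zero_of_mem hmE (by simp)
        obtain ⟨hP1, hP2, hP3⟩ := pre_head 4 a (Or.inl rfl) ha0
        refine ⟨mem_Eset.mpr ⟨by simp [pre], ?_, ?_⟩, ?_⟩
        · rintro x hx
          simp only [pre, List.headI, List.mem_cons] at hx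
          rcases hx with rfl | hx
          · exact ⟨hP2, by rw [hP1]⟩
          · exact hg x (by simp [hx])
        · show (c : ℤ) = cost ((4 * (a :: r).headI.sign) :: a :: r)
          simp only [List.headI]
          rw [cost_cons, if_pos (hP3.mpr rfl), hP1]
          push_cast [h3] at hcost ⊢
          linarith
        · simp only [pre, List.length_cons] at hmp ⊢
          exact parity_flip₂ hmp
    · -- pre (-4) image
      obtain ⟨hne, hg, hcost⟩ := mem_Eset.mp hmE
      match m with
      | [] => exact absurd rfl hne
      | a :: r =>
        have ha0 : a ≠ 0 := ne_zero_of_mem hmE (by simp)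
        obtain ⟨hP1, hP2, hP3⟩ := pre_head (-4) a (Or.inr rfl) ha0
        refine ⟨mem_Eset.mpr ⟨by simp [pre], ?_, ?_⟩, ?_⟩
        · rintro x hx
          simp only [pre, List.headI, List.mem_cons] at hx
          rcases hx with rfl | hx
          · exact ⟨hP2, by rw [hP1]⟩
          · exact hg x (by simp [hx])
        · show (c : ℤ) = cost (((-4) * (a :: r).headI.sign) :: a :: r)
          simp only [List.headI]
          rw [cost_cons, if_neg (fun h => by have := hP3.mp h; norm_num at this), hP1]
          push_cast [h4] at hcost ⊢
          linarith
        · simp only [pre, List.length_cons] at hmp ⊢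
          exact parity_flip₂ hmp

/-! ### Injectivity and disjointness -/

lemma bump_injOn (b : Bool) (c : ℕ) : Set.InjOn bump (M b c) := by
  rintro l₁ ⟨h1, -⟩ l₂ ⟨h2, -⟩ heq
  obtain ⟨hne1, -, -⟩ := mem_Eset.mp h1
  obtain ⟨hne2, -, -⟩ := mem_Eset.mp h2
  match l₁, l₂ with
  | [], _ => exact absurd rfl hne1
  | _ :: _, [] => exact absurd rfl hne2
  | e₁ :: t₁, e₂ :: t₂ =>
    simp only [bump, List.cons.injEq] at heq
    obtain ⟨hh, ht⟩ := heq
    have he1 : e₁ ≠ 0 := ne_zero_of_mem h1 (by simp)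
    have he2 : e₂ ≠ 0 := ne_zero_of_mem h2 (by simp)
    have hs : e₁.sign = e₂.sign := by
      have := congrArg Int.sign hh
      rwa [(sign_bump he1).1, (sign_bump he2).1] at this
    rw [ht]
    congr 1
    rw [hs] at hh
    linarith

lemma pre_injOn (s : ℤ) (X : Set (List ℤ)) : Set.InjOn (pre s) X := by
  rintro l₁ - l₂ - heq
  simpa [pre] using congrArg List.tail heq

lemma mem_bump_image {X : Set (List ℤ)} {c : ℕ} (hX : X ⊆ Eset c) {l : List ℤ}
    (hl : l ∈ bump '' X) : ∃ e t, l = e :: t ∧ 6 ≤ |e| := by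
  obtain ⟨m, hm, rfl⟩ := hl
  obtain ⟨hne, hg, -⟩ := mem_Eset.mp (hX hm)
  match m with
  | [] => exact absurd rfl hne
  | e :: t =>
    have he0 : e ≠ 0 := by
      have := (hg e (by simp)).2
      intro h; rw [h] at this; simp at this
    exact ⟨e + 2 * e.sign, t, rfl, by rw [(sign_bump he0).2]; have := (hg e (by simp)).2; omega⟩

lemma mem_pre_image {s : ℤ} (hs : s = 4 ∨ s = -4) {X : Set (List ℤ)} {c : ℕ}
    (hX : X ⊆ Eset c) {l : List ℤ} (hl : l ∈ pre s '' X) :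
    ∃ e a r, l = e :: a :: r ∧ |e| = 4 ∧ (e.sign = a.sign ↔ s = 4) := by
  obtain ⟨m, hm, rfl⟩ := hl
  obtain ⟨hne, hg, -⟩ := mem_Eset.mp (hX hm)
  match m with
  | [] => exact absurd rfl hne
  | a :: r =>
    have ha0 : a ≠ 0 := by
      have := (hg a (by simp)).2
      intro h; rw [h] at this; simp at this
    obtain ⟨hP1, hP2, hP3⟩ := pre_head s a hs ha0
    exact ⟨s * a.sign, a, r, rfl, hP1, hP3⟩

/-! ### Counting -/

lemma ncard_step (b : Bool) (c c₂ c₃ c₄ : ℕ)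
    (h2 : c = c₂ + 2) (h3 : c = c₃ + 3) (h4 : c = c₄ + 4) (hc : 8 ≤ c) :
    (M b c).ncard = (M b c₂).ncard + (M (!b) c₃).ncard + (M (!b) c₄).ncard := by
  have hsub2 : M b c₂ ⊆ Eset c₂ := fun _ h => h.1
  have hsub3 : M (!b) c₃ ⊆ Eset c₃ := fun _ h => h.1
  have hsub4 : M (!b) c₄ ⊆ Eset c₄ := fun _ h => h.1
  have hd12 : Disjoint (bump '' M b c₂) (pre 4 '' M (!b) c₃) := by
    rw [Set.disjoint_left]
    rintro l hl1 hl2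
    obtain ⟨e, t, rfl, he⟩ := mem_bump_image hsub2 hl1
    obtain ⟨e', a, r, heq, he', -⟩ := mem_pre_image (Or.inl rfl) hsub3 hl2
    simp only [List.cons.injEq] at heq
    rw [← heq.1] at he'
    omega
  have hd13 : Disjoint (bump '' M b c₂) (pre (-4) '' M (!b) c₄) := by
    rw [Set.disjoint_left]
    rintro l hl1 hl2
    obtain ⟨e, t, rfl, he⟩ := mem_bump_image hsub2 hl1
    obtain ⟨e', a, r, heq, he', -⟩ := mem_pre_image (Or.inr rfl) hsub4 hl2
    simp only [List.cons.injEq] at heq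
    rw [← heq.1] at he'
    omega
  have hd23 : Disjoint (pre 4 '' M (!b) c₃) (pre (-4) '' M (!b) c₄) := by
    rw [Set.disjoint_left]
    rintro l hl1 hl2
    obtain ⟨e, a, r, rfl, -, hs⟩ := mem_pre_image (Or.inl rfl) hsub3 hl1
    obtain ⟨e', a', r', heq, -, hs'⟩ := mem_pre_image (Or.inr rfl) hsub4 hl2
    simp only [List.cons.injEq] at heq
    obtain ⟨rfl, rfl, rfl⟩ := heq
    have h1 := hs.mpr rfl
    have h2 := hs'.mp h1
    norm_num at h2
  have hf2 : (bump '' M b c₂).Finite := (M_finite b c₂).image _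
  have hf3 : (pre 4 '' M (!b) c₃).Finite := (M_finite (!b) c₃).image _
  have hf4 : (pre (-4) '' M (!b) c₄).Finite := (M_finite (!b) c₄).image _
  rw [partition b c c₂ c₃ c₄ h2 h3 h4 hc]
  rw [Set.ncard_union_eq (by rw [Set.disjoint_union_left]; exact ⟨hd13, hd23⟩)
      (hf2.union hf3) hf4,
    Set.ncard_union_eq hd12 hf2 hf3,
    Set.ncard_image_of_injOn (bump_injOn b c₂),
    Set.ncard_image_of_injOn (pre_injOn 4 _),
    Set.ncard_image_of_injOn (pre_injOn (-4) _)]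

lemma Δ_eq (c : ℕ) : Δ c = ((M true c).ncard : ℤ) - (M false c).ncard := by
  rw [Δ, Nat.card_coe_set_eq, Nat.card_coe_set_eq, KEset_eq, LEset_eq]

/-! ### Base cases -/

lemma Eset_eq_of_small {c : ℕ} (hc : c ≤ 6) :
    Eset c = {l | ∃ e : ℤ, l = [e] ∧ Even e ∧ 4 ≤ |e| ∧ (c : ℤ) = |e|} := by
  ext l
  constructor
  · intro hl
    obtain ⟨hne, hg, hcost⟩ := mem_Eset.mp hl
    have hlen := length_le_of_mem_Eset hl
    have : l.length = 1 := by
      have : l.length ≠ 0 := by simpa [List.length_eq_zero_iff] using hne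
      omega
    obtain ⟨e, rfl⟩ := List.length_eq_one_iff.mp this
    rw [cost_singleton] at hcost
    exact ⟨e, rfl, (hg e (by simp)).1, (hg e (by simp)).2, hcost⟩
  · rintro ⟨e, rfl, h1, h2, h3⟩
    exact mem_Eset.mpr ⟨by simp, by simpa using ⟨h1, h2⟩, by rwa [cost_singleton]⟩

lemma Eset_4 : Eset 4 = {[4], [-4]} := by
  rw [Eset_eq_of_small (by norm_num)]
  ext l
  simp only [Set.mem_setOf_eq, Set.mem_insert_iff, Set.mem_singleton_iff]
  constructor
  · rintro ⟨e, rfl, -, -, h3⟩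
    have : e = 4 ∨ e = -4 := by
      rcases abs_cases e with ⟨h, -⟩ | ⟨h, -⟩ <;> omega
    rcases this with rfl | rfl <;> simp
  · rintro (rfl | rfl)
    · exact ⟨4, rfl, by decide, by decide, by decide⟩
    · exact ⟨-4, rfl, by decide, by decide, by decide⟩

lemma Eset_5 : Eset 5 = ∅ := by
  rw [Eset_eq_of_small (by norm_num)]
  ext l
  simp only [Set.mem_setOf_eq, Set.mem_empty_iff_false, iff_false]
  rintro ⟨e, rfl, h1, -, h3⟩
  obtain ⟨k, hk⟩ := even_abs' h1
  omega

lemma Eset_6 : Eset 6 = {[6], [-6]} := by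
  rw [Eset_eq_of_small (by norm_num)]
  ext l
  simp only [Set.mem_setOf_eq, Set.mem_insert_iff, Set.mem_singleton_iff]
  constructor
  · rintro ⟨e, rfl, -, -, h3⟩
    have : e = 6 ∨ e = -6 := by
      rcases abs_cases e with ⟨h, -⟩ | ⟨h, -⟩ <;> omega
    rcases this with rfl | rfl <;> simp
  · rintro (rfl | rfl)
    · exact ⟨6, rfl, by decide, by decide, by decide⟩
    · exact ⟨-6, rfl, by decide, by decide, by decide⟩

lemma Eset_7 : Eset 7 = {[4, 4], [-4, -4]} := by
  ext l
  simp only [Set.mem_insert_iff, Set.mem_singleton_iff]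
  constructor
  · intro hl
    obtain ⟨hne, hg, hcost⟩ := mem_Eset.mp hl
    have hlen := length_le_of_mem_Eset hl
    have hne0 : l.length ≠ 0 := by simpa [List.length_eq_zero_iff] using hne
    have : l.length = 1 ∨ l.length = 2 := by omega
    rcases this with h | h
    · obtain ⟨e, rfl⟩ := List.length_eq_one_iff.mp h
      rw [cost_singleton] at hcost
      obtain ⟨k, hk⟩ := even_abs' (hg e (by simp)).1
      omega
    · match l, h with
      | [e, a], _ =>
        obtain ⟨he1, he2⟩ := hg e (by simp)
        obtain ⟨ha1, ha2⟩ := hg a (by simp)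
        rw [cost_cons, cost_singleton] at hcost
        obtain ⟨k1, hk1⟩ := even_abs' he1
        obtain ⟨k2, hk2⟩ := even_abs' ha1
        by_cases hs : e.sign = a.sign
        · rw [if_pos hs] at hcost
          have h4 : |e| = 4 ∧ |a| = 4 := by omega
          have he : e = 4 ∨ e = -4 := by
            rcases abs_cases e with ⟨h', -⟩ | ⟨h', -⟩ <;> omega
          have ha : a = 4 ∨ a = -4 := by
            rcases abs_cases a with ⟨h', -⟩ | ⟨h', -⟩ <;> omega
          rcases he with rfl | rfl <;> rcases ha with rfl | rfl
          · exact Or.inl rfl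
          · exact absurd hs (by decide)
          · exact absurd hs (by decide)
          · exact Or.inr rfl
        · rw [if_neg hs] at hcost
          omega
  · rintro (rfl | rfl) <;>
      refine mem_Eset.mpr ⟨by simp, by decide, ?_⟩ <;>
      · rw [cost_cons, cost_singleton]
        norm_num

lemma ncard_pair_ne {l₁ l₂ : List ℤ} (h : l₁ ≠ l₂) : ({l₁, l₂} : Set (List ℤ)).ncard = 2 :=
  Set.ncard_pair h

theorem Δ_recursion :
    Δ 4 = -2 ∧ Δ 5 = 0 ∧ Δ 6 = -2 ∧ Δ 7 = 2 ∧
      ∀ c : ℕ, 8 ≤ c → Δ c = Δ (c - 2) - Δ (c - 3) - Δ (c - 4) := by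
  have hK4 : KEset 4 = ∅ := by
    ext l
    simp only [KEset, Set.mem_setOf_eq, Eset_4, Set.mem_empty_iff_false, iff_false]
    rintro ⟨(rfl | rfl), h⟩ <;> simp at h
  have hL4 : LEset 4 = {[4], [-4]} := by
    ext l
    simp only [LEset, Set.mem_setOf_eq, Eset_4, Set.mem_insert_iff, Set.mem_singleton_iff]
    constructor
    · rintro ⟨h, -⟩; exact h
    · rintro (rfl | rfl) <;> exact ⟨by simp, by decide⟩
  have hK5 : KEset 5 = ∅ := by
    ext l; simp [KEset, Eset_5]
  have hL5 : LEset 5 = ∅ := by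
    ext l; simp [LEset, Eset_5]
  have hK6 : KEset 6 = ∅ := by
    ext l
    simp only [KEset, Set.mem_setOf_eq, Eset_6, Set.mem_empty_iff_false, iff_false]
    rintro ⟨(rfl | rfl), h⟩ <;> simp at h
  have hL6 : LEset 6 = {[6], [-6]} := by
    ext l
    simp only [LEset, Set.mem_setOf_eq, Eset_6, Set.mem_insert_iff, Set.mem_singleton_iff]
    constructor
    · rintro ⟨h, -⟩; exact h
    · rintro (rfl | rfl) <;> exact ⟨by simp, by decide⟩
  have hK7 : KEset 7 = {[4, 4], [-4, -4]} := by
    ext l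
    simp only [KEset, Set.mem_setOf_eq, Eset_7, Set.mem_insert_iff, Set.mem_singleton_iff]
    constructor
    · rintro ⟨h, -⟩; exact h
    · rintro (rfl | rfl) <;> exact ⟨by simp, by decide⟩
  have hL7 : LEset 7 = ∅ := by
    ext l
    simp only [LEset, Set.mem_setOf_eq, Eset_7, Set.mem_empty_iff_false, iff_false]
    rintro ⟨(rfl | rfl), h⟩ <;> simp [Nat.odd_iff] at h
  refine ⟨?_, ?_, ?_, ?_, ?_⟩
  · rw [Δ, Nat.card_coe_set_eq, Nat.card_coe_set_eq, hK4, hL4,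
      Set.ncard_empty, Set.ncard_pair (by decide)]
    norm_num
  · rw [Δ, Nat.card_coe_set_eq, Nat.card_coe_set_eq, hK5, hL5, Set.ncard_empty]
    norm_num
  · rw [Δ, Nat.card_coe_set_eq, Nat.card_coe_set_eq, hK6, hL6,
      Set.ncard_empty, Set.ncard_pair (by decide)]
    norm_num
  · rw [Δ, Nat.card_coe_set_eq, Nat.card_coe_set_eq, hK7, hL7,
      Set.ncard_empty, Set.ncard_pair (by decide)]
    norm_num
  · intro c hc
    have e2 : c - 2 = c - 2 := rfl
    have hKstep := ncard_step true c (c - 2) (c - 3) (c - 4) (by omega) (by omega) (by omega) hc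
    have hLstep := ncard_step false c (c - 2) (c - 3) (c - 4) (by omega) (by omega) (by omega) hc
    simp only [Bool.not_true, Bool.not_false] at hKstep hLstep
    rw [Δ_eq, Δ_eq, Δ_eq, Δ_eq, hKstep, hLstep]
    push_cast
    ring
end

section
/- Suppose B : ℕ → ℚ satisfies B(c) = B(c−2) + 2·B(c−4) + 2·j(d−3) + 2·(−1)^d·(δ_{2,d mod 3} − 2·δ_{1,d mod 3}) for odd c ≥ 11, where d = (c−1)/2, with B(7)=2 and B(9)=4. Then for odd c ≥ 7, B(c) = ((3d+1)·2^{d−1} − 14·(−1)^d)/27 + (2/3)·(−1)^d·(δ_{1,d mod 3} + 3·δ_{2,d mod 3}). -/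
def jac (c : ℕ) : ℤ := (2 ^ c - (-1 : ℤ) ^ c) / 3

lemma jac_dvd (n : ℕ) : (3 : ℤ) ∣ 2 ^ n - (-1 : ℤ) ^ n := by
  induction n with
  | zero => norm_num
  | succ k ih =>
    have : (2:ℤ) ^ (k+1) - (-1)^(k+1) = 2 * (2^k - (-1)^k) + 3 * (-1)^k := by ring
    rw [this]
    exact dvd_add (Dvd.dvd.mul_left ih 2) ⟨(-1)^k, rfl⟩

lemma jac_cast (n : ℕ) : (jac n : ℚ) = (2 ^ n - (-1) ^ n) / 3 := by
  obtain ⟨k, hk⟩ := jac_dvd n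
  have : jac n = k := by rw [jac, hk, Int.mul_ediv_cancel_left _ (by norm_num)]
  rw [this]
  have : ((2:ℚ) ^ n - (-1) ^ n) = 3 * (k : ℚ) := by
    have := congrArg (fun z : ℤ => (z : ℚ)) hk
    push_cast at this
    linarith [this]
  rw [this]; ring

noncomputable def F (d : ℕ) : ℚ :=
  ((3 * (d : ℚ) + 1) * 2 ^ (d - 1) - 14 * (-1 : ℚ) ^ d) / 27
    + (2 / 3) * (-1 : ℚ) ^ d *
      ((if d % 3 = 1 then (1 : ℚ) else 0) + 3 * (if d % 3 = 2 then (1 : ℚ) else 0))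

lemma F_rec (e : ℕ) : F (e + 5) = F (e + 4) + 2 * F (e + 3) + 2 * (jac (e + 2) : ℚ)
    + 2 * (-1 : ℚ) ^ (e + 5) *
      ((if (e + 5) % 3 = 2 then (1 : ℚ) else 0)
        - 2 * (if (e + 5) % 3 = 1 then (1 : ℚ) else 0)) := by
  have hx : ∀ k : ℕ, (2:ℚ) ^ (e + k) = 2 ^ e * 2 ^ k := fun k => pow_add 2 e k
  have hs : ∀ k : ℕ, (-1:ℚ) ^ (e + k) = (-1) ^ e * (-1) ^ k := fun k => pow_add (-1) e k
  have h3 : e % 3 = 0 ∨ e % 3 = 1 ∨ e % 3 = 2 := by omega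
  rcases h3 with h | h | h <;>
    simp only [F, jac_cast, show e+5-1 = e+4 from rfl, show e+4-1 = e+3 from rfl,
      show e+3-1 = e+2 from rfl, hx, hs] <;>
    [ (simp only [show (e+5)%3 = 2 from by omega, show (e+4)%3 = 1 from by omega,
        show (e+3)%3 = 0 from by omega]);
      (simp only [show (e+5)%3 = 0 from by omega, show (e+4)%3 = 2 from by omega,
        show (e+3)%3 = 1 from by omega]);
      (simp only [show (e+5)%3 = 1 from by omega, show (e+4)%3 = 0 from by omega,
        show (e+3)%3 = 2 from by omega])] <;>
    norm_num <;> ring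

theorem B_closed_form (B : ℕ → ℚ) (h7 : B 7 = 2) (h9 : B 9 = 4)
    (hrec : ∀ c : ℕ, Odd c → 11 ≤ c →
      B c = B (c - 2) + 2 * B (c - 4) + 2 * (jac ((c - 1) / 2 - 3) : ℚ)
        + 2 * (-1 : ℚ) ^ ((c - 1) / 2) *
          ((if (c - 1) / 2 % 3 = 2 then (1 : ℚ) else 0)
            - 2 * (if (c - 1) / 2 % 3 = 1 then (1 : ℚ) else 0))) :
    ∀ c : ℕ, Odd c → 7 ≤ c →
      B c = ((3 * (((c - 1) / 2 : ℕ) : ℚ) + 1) * 2 ^ ((c - 1) / 2 - 1)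
          - 14 * (-1 : ℚ) ^ ((c - 1) / 2)) / 27
        + (2 / 3) * (-1 : ℚ) ^ ((c - 1) / 2) *
          ((if (c - 1) / 2 % 3 = 1 then (1 : ℚ) else 0)
            + 3 * (if (c - 1) / 2 % 3 = 2 then (1 : ℚ) else 0)) := by
  have key : ∀ e : ℕ, B (2 * e + 7) = F (e + 3) := by
    intro e
    induction e using Nat.strong_induction_on with
    | _ e ih =>
      match e with
      | 0 => rw [show 2*0+7 = 7 from rfl, h7]; norm_num [F]
      | 1 => rw [show 2*1+7 = 9 from rfl, h9]; norm_num [F]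
      | (n+2) =>
        have h1 := ih n (by omega)
        have h2 := ih (n+1) (by omega)
        have hr := hrec (2*n+11) ⟨n+5, by ring⟩ (by omega)
        have e1 : (2*n+11-1)/2 = n+5 := by omega
        have e2 : 2*n+11-2 = 2*(n+1)+7 := by omega
        have e3 : 2*n+11-4 = 2*n+7 := by omega
        rw [e1, e2, e3, show n+5-3 = n+2 from rfl, h1, h2] at hr
        have : 2*(n+2)+7 = 2*n+11 := by omega
        rw [this, hr, show n+2+3 = n+5 from rfl, F_rec n]
  intro c hodd hge
  obtain ⟨k, hk⟩ := hodd
  have hc : c = 2 * (k - 3) + 7 := by omega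
  have hd : (c - 1) / 2 = (k - 3) + 3 := by omega
  rw [hd, hc, key (k-3), F]
end
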